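/- arXiv:2310.13658 — 2 statements merged into one kernel-verified Lean document; each statement's English description precedes it below -/
import Mathlib

section
/- For every integer n ≥ 0, ∑_{k=1}^{n+1} S^{(1)}_{n+1,k} · φ(k) equals the sum of parts, counted without multiplicity, over all partitions of n+1 (i.e., the sum over all partitions λ of n+1 of the sum of the distinct part sizes occurring in λ). -/
open Finset

/-- The number of partitions of `n`. -/
def p (n : ℕ) : ℕ := Fintype.card (Nat.Partition n)

/-- The partition function extended by zero to negative integer arguments. -/
def pz (m : ℤ) : ℤ := if 0 ≤ m then (p m.toNat : ℤ) else 0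

/-- `S r n k` : the total number of parts equal to `k` in all partitions of `n`
whose parts are all at least `r`. -/
def S (r n k : ℕ) : ℕ :=
  ∑ P : Nat.Partition n, if ∀ i ∈ P.parts, r ≤ i then P.parts.count k else 0

/-- Removing a fixed sub-multiset from partitions containing it. -/
def subEquiv (n : ℕ) (s : Multiset ℕ) (hs : ∀ i ∈ s, 0 < i) (h : s.sum ≤ n) :
    {P : Nat.Partition n // s ≤ P.parts} ≃ Nat.Partition (n - s.sum) where
  toFun P := ⟨P.1.parts - s,
    fun hi => P.1.parts_pos (Multiset.mem_of_le (Multiset.sub_le_self _ _) hi),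
    by
      have h1 : P.1.parts - s + s = P.1.parts := tsub_add_cancel_of_le P.2
      have h2 : (P.1.parts - s).sum + s.sum = n := by
        rw [← Multiset.sum_add, h1, P.1.parts_sum]
      omega⟩
  invFun Q := ⟨⟨Q.parts + s,
    fun hi => by
      rcases Multiset.mem_add.mp hi with h1 | h1
      exacts [Q.parts_pos h1, hs _ h1],
    by rw [Multiset.sum_add, Q.parts_sum]; omega⟩, Multiset.le_add_left _ _⟩
  left_inv P := by
    apply Subtype.ext
    apply Nat.Partition.ext
    exact tsub_add_cancel_of_le P.2
  right_inv Q := by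
    apply Nat.Partition.ext
    exact add_tsub_cancel_right _ _

lemma msum_mono {s t : Multiset ℕ} (h : s ≤ t) : s.sum ≤ t.sum := by
  have h1 : t - s + s = t := tsub_add_cancel_of_le h
  have h2 : (t - s).sum + s.sum = t.sum := by rw [← Multiset.sum_add, h1]
  omega

lemma card_count_eq (n k j : ℕ) (hk : 0 < k) (hj : 0 < j) :
    Fintype.card {P : Nat.Partition n // j ≤ P.parts.count k} =
      Fintype.card {P : Nat.Partition n // j * k ∈ P.parts} := by
  have e1 : ∀ P : Nat.Partition n,
      (j ≤ P.parts.count k ↔ Multiset.replicate j k ≤ P.parts) :=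
    fun P => Multiset.le_count_iff_replicate_le
  have e2 : ∀ P : Nat.Partition n, (j * k ∈ P.parts ↔ {j * k} ≤ P.parts) :=
    fun P => Multiset.singleton_le.symm
  by_cases hle : j * k ≤ n
  · have hsum1 : (Multiset.replicate j k).sum = j * k := by
      rw [Multiset.sum_replicate]; simp [Nat.smul_one_eq_cast]
    have hsum2 : ({j * k} : Multiset ℕ).sum = j * k := by simp
    have E1 : {P : Nat.Partition n // j ≤ P.parts.count k} ≃
        Nat.Partition (n - j * k) := by
      refine (Equiv.subtypeEquivRight e1).trans ?_
      have := subEquiv n (Multiset.replicate j k)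
        (fun i hi => by rw [Multiset.eq_of_mem_replicate hi]; exact hk)
        (by rw [hsum1]; exact hle)
      rwa [hsum1] at this
    have E2 : {P : Nat.Partition n // j * k ∈ P.parts} ≃
        Nat.Partition (n - j * k) := by
      refine (Equiv.subtypeEquivRight e2).trans ?_
      have := subEquiv n {j * k}
        (fun i hi => by rw [Multiset.mem_singleton.mp hi]; positivity)
        (by rw [hsum2]; exact hle)
      rwa [hsum2] at this
    rw [Fintype.card_congr E1, Fintype.card_congr E2]
  · have h1 : IsEmpty {P : Nat.Partition n // j ≤ P.parts.count k} := by
      refine ⟨fun ⟨P, hP⟩ => ?_⟩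
      have hrep := (e1 P).mp hP
      have : (Multiset.replicate j k).sum ≤ P.parts.sum := msum_mono hrep
      rw [Multiset.sum_replicate, P.parts_sum] at this
      simp only [smul_eq_mul] at this
      omega
    have h2 : IsEmpty {P : Nat.Partition n // j * k ∈ P.parts} := by
      refine ⟨fun ⟨P, hP⟩ => ?_⟩
      have : j * k ≤ P.parts.sum := Multiset.le_sum_of_mem hP
      rw [P.parts_sum] at this
      omega
    rw [Fintype.card_eq_zero, Fintype.card_eq_zero]

lemma sum_indicator_card (N c : ℕ) (h : c ≤ N) :
    ∑ j ∈ Finset.Icc 1 N, (if j ≤ c then 1 else 0) = c := by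
  rw [← Finset.card_filter]
  have : Finset.filter (fun j => j ≤ c) (Finset.Icc 1 N) = Finset.Icc 1 c := by
    ext x
    simp only [Finset.mem_filter, Finset.mem_Icc]
    omega
  rw [this, Nat.card_Icc]
  omega

set_option maxHeartbeats 1600000 in
theorem sum_S1_totient_eq_sum_distinct_parts (n : ℕ) :
    ∑ k ∈ Finset.Icc 1 (n + 1), S 1 (n + 1) k * Nat.totient k =
      ∑ P : Nat.Partition (n + 1), ∑ i ∈ P.parts.toFinset, i := by
  set N := n + 1 with hN
  -- c m : number of partitions of N containing m as a part
  obtain ⟨c, hc⟩ : ∃ c : ℕ → ℕ, ∀ m, c m =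
      ∑ P : Nat.Partition N, (if m ∈ P.parts then 1 else 0) := ⟨_, fun _ => rfl⟩
  have hcm : ∀ m, N < m → c m = 0 := by
    intro m hm
    rw [hc]
    apply Finset.sum_eq_zero
    intro P _
    rw [if_neg]
    intro hmem
    have : m ≤ P.parts.sum := Multiset.le_sum_of_mem hmem
    rw [P.parts_sum] at this
    omega
  -- Step 1: S 1 N k = ∑_P count k
  have hS : ∀ k, S 1 N k = ∑ P : Nat.Partition N, P.parts.count k := by
    intro k
    apply Finset.sum_congr rfl
    intro P _
    rw [if_pos]
    intro i hi
    exact P.parts_pos hi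
  -- Step 2: count bound
  have hcount : ∀ (P : Nat.Partition N) (k : ℕ), 1 ≤ k → P.parts.count k ≤ N := by
    intro P k hk
    have hrep : Multiset.replicate (P.parts.count k) k ≤ P.parts :=
      Multiset.le_count_iff_replicate_le.mp le_rfl
    have : (Multiset.replicate (P.parts.count k) k).sum ≤ P.parts.sum :=
      msum_mono hrep
    rw [Multiset.sum_replicate, P.parts_sum] at this
    simp only [smul_eq_mul] at this
    nlinarith
  -- Step 3: ∑_P count k = ∑_{j ∈ Icc 1 N} c (j * k)
  have hstep3 : ∀ k ∈ Finset.Icc 1 N, (∑ P : Nat.Partition N, P.parts.count k)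
      = ∑ j ∈ Finset.Icc 1 N, c (j * k) := by
    intro k hkmem
    rw [Finset.mem_Icc] at hkmem
    have hk : 0 < k := hkmem.1
    calc ∑ P : Nat.Partition N, P.parts.count k
        = ∑ P : Nat.Partition N, ∑ j ∈ Finset.Icc 1 N,
            (if j ≤ P.parts.count k then 1 else 0) := by
          apply Finset.sum_congr rfl
          intro P _
          rw [sum_indicator_card N _ (hcount P k hk)]
      _ = ∑ j ∈ Finset.Icc 1 N, ∑ P : Nat.Partition N,
            (if j ≤ P.parts.count k then 1 else 0) := Finset.sum_comm
      _ = ∑ j ∈ Finset.Icc 1 N, c (j * k) := by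
          apply Finset.sum_congr rfl
          intro j hj
          rw [Finset.mem_Icc] at hj
          have hj1 : 0 < j := hj.1
          have l1 : (∑ P : Nat.Partition N, (if j ≤ P.parts.count k then 1 else 0))
              = Fintype.card {P : Nat.Partition N // j ≤ P.parts.count k} := by
            rw [Fintype.card_subtype, Finset.card_filter]
          have l2 : c (j * k)
              = Fintype.card {P : Nat.Partition N // j * k ∈ P.parts} := by
            rw [hc, Fintype.card_subtype, Finset.card_filter]
          rw [l1, l2, card_count_eq N k j hk hj1]
  -- LHS = ∑ over pairs
  have hLHS : ∑ k ∈ Finset.Icc 1 N, S 1 N k * Nat.totient k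
      = ∑ k ∈ Finset.Icc 1 N, ∑ j ∈ Finset.Icc 1 N, Nat.totient k * c (j * k) := by
    apply Finset.sum_congr rfl
    intro k hk
    rw [hS k, hstep3 k hk, Finset.sum_mul]
    exact Finset.sum_congr rfl fun j _ => mul_comm _ _
  -- RHS = ∑_{m ∈ Icc 1 N} m * c m
  have hRHS : (∑ P : Nat.Partition N, ∑ i ∈ P.parts.toFinset, i)
      = ∑ m ∈ Finset.Icc 1 N, m * c m := by
    calc (∑ P : Nat.Partition N, ∑ i ∈ P.parts.toFinset, i)
        = ∑ P : Nat.Partition N, ∑ m ∈ Finset.Icc 1 N,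
            (if m ∈ P.parts then m else 0) := by
          apply Finset.sum_congr rfl
          intro P _
          rw [← Finset.sum_filter]
          apply Finset.sum_congr ?_ (fun _ _ => rfl)
          ext m
          simp only [Finset.mem_filter, Finset.mem_Icc, Multiset.mem_toFinset]
          constructor
          · intro hm
            refine ⟨⟨P.parts_pos hm, ?_⟩, hm⟩
            have : m ≤ P.parts.sum := Multiset.le_sum_of_mem hm
            rw [P.parts_sum] at this
            exact this
          · exact fun h => h.2
      _ = ∑ m ∈ Finset.Icc 1 N, ∑ P : Nat.Partition N,
            (if m ∈ P.parts then m else 0) := Finset.sum_comm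
      _ = ∑ m ∈ Finset.Icc 1 N, m * c m := by
          apply Finset.sum_congr rfl
          intro m _
          rw [hc, Finset.mul_sum]
          apply Finset.sum_congr rfl
          intro P _
          split <;> simp
  rw [hLHS, hRHS]
  -- rewrite m = ∑ φ d over divisors, then to antidiagonal
  have hm_tot : ∀ m ∈ Finset.Icc 1 N, m * c m
      = ∑ q ∈ Nat.divisorsAntidiagonal m, Nat.totient q.1 * c (q.1 * q.2) := by
    intro m hm
    rw [Finset.mem_Icc] at hm
    have : ∑ q ∈ Nat.divisorsAntidiagonal m, Nat.totient q.1 * c (q.1 * q.2)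
        = ∑ q ∈ Nat.divisorsAntidiagonal m, Nat.totient q.1 * c m := by
      apply Finset.sum_congr rfl
      intro q hq
      rw [(Nat.mem_divisorsAntidiagonal.mp hq).1]
    rw [this, ← Finset.sum_mul]
    have : ∑ q ∈ Nat.divisorsAntidiagonal m, Nat.totient q.1 = m := by
      rw [Nat.sum_divisorsAntidiagonal (fun a _ => Nat.totient a)]
      exact Nat.sum_totient m
    rw [this]
  rw [Finset.sum_congr rfl hm_tot]
  -- now both sides are sums of φ k * c (k*j); reindex via sigma types
  rw [Finset.sum_sigma', Finset.sum_sigma']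
  symm
  rw [← Finset.sum_filter_add_sum_filter_not
    (((Finset.Icc 1 N).sigma fun _ => Finset.Icc 1 N)) (fun q => q.1 * q.2 ≤ N)]
  have hzero : ∑ q ∈ ((Finset.Icc 1 N).sigma fun _ => Finset.Icc 1 N).filter
      (fun q => ¬ q.1 * q.2 ≤ N), Nat.totient q.1 * c (q.2 * q.1) = 0 := by
    apply Finset.sum_eq_zero
    intro q hq
    rw [Finset.mem_filter] at hq
    rw [hcm (q.2 * q.1) (by rw [mul_comm]; exact not_le.mp hq.2)]
    simp
  rw [hzero, add_zero]
  refine Finset.sum_nbij' (i := fun q => ⟨q.2.1, q.2.2⟩)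
    (j := fun q => ⟨q.1 * q.2, (q.1, q.2)⟩) ?_ ?_ ?_ ?_ ?_
  · intro q hq
    rw [Finset.mem_sigma, Finset.mem_Icc, Nat.mem_divisorsAntidiagonal] at hq
    rw [Finset.mem_filter, Finset.mem_sigma, Finset.mem_Icc, Finset.mem_Icc]
    obtain ⟨⟨hm1, hm2⟩, heq, hne⟩ := hq
    have h1 : 1 ≤ q.2.1 := Nat.pos_of_ne_zero (by
      rintro h; rw [h, zero_mul] at heq; omega)
    have h2 : 1 ≤ q.2.2 := Nat.pos_of_ne_zero (by
      rintro h; rw [h, mul_zero] at heq; omega)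
    refine ⟨⟨⟨h1, ?_⟩, h2, ?_⟩, ?_⟩ <;> nlinarith
  · intro q hq
    rw [Finset.mem_filter, Finset.mem_sigma, Finset.mem_Icc, Finset.mem_Icc] at hq
    rw [Finset.mem_sigma, Finset.mem_Icc, Nat.mem_divisorsAntidiagonal]
    obtain ⟨⟨⟨ha, hb⟩, hd, he⟩, hf⟩ := hq
    exact ⟨⟨by nlinarith, hf⟩, rfl, by positivity⟩
  · intro q hq
    rw [Finset.mem_sigma, Nat.mem_divisorsAntidiagonal] at hq
    exact Sigma.ext hq.2.1 (heq_of_eq rfl)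
  · intro q hq
    rfl
  · intro q hq
    simp [mul_comm]
end

section
/- Let α be a prime number. For every integer n ≥ 0, ∑_{k=1}^{n+1} S^{(1)}_{n+1,k} · μ(α·k) = -∑_{j ≥ 0, α^j ≤ n+1} p(n+1-α^j). -/
open Finset

-- the key bijection
def partEquiv (n k m : ℕ) (hk : 0 < k) (h : m * k ≤ n) :
    {P : Nat.Partition n // m ≤ P.parts.count k} ≃ Nat.Partition (n - m * k) where
  toFun P := ⟨P.1.parts - Multiset.replicate m k,
    fun hi => P.1.parts_pos (Multiset.mem_of_le (tsub_le_self) hi),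
    by
      have hle : Multiset.replicate m k ≤ P.1.parts :=
        Multiset.le_count_iff_replicate_le.mp P.2
      have := tsub_add_cancel_of_le hle
      have hsum := congrArg Multiset.sum this
      rw [Multiset.sum_add, Multiset.sum_replicate, P.1.parts_sum, smul_eq_mul] at hsum
      omega⟩
  invFun Q := ⟨⟨Q.parts + Multiset.replicate m k,
    fun hi => by
      rcases Multiset.mem_add.mp hi with h' | h'
      · exact Q.parts_pos h'
      · rw [Multiset.eq_of_mem_replicate h']; exact hk,
    by rw [Multiset.sum_add, Q.parts_sum, Multiset.sum_replicate, smul_eq_mul]; omega⟩,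
    by simp [Multiset.count_replicate]⟩
  left_inv P := by
    apply Subtype.ext
    apply Nat.Partition.ext
    exact tsub_add_cancel_of_le (Multiset.le_count_iff_replicate_le.mp P.2)
  right_inv Q := by
    apply Nat.Partition.ext
    exact add_tsub_cancel_right _ _

lemma count_mul_le (n k : ℕ) (P : Nat.Partition n) : P.parts.count k * k ≤ n := by
  have hle : Multiset.replicate (P.parts.count k) k ≤ P.parts :=
    Multiset.le_count_iff_replicate_le.mp le_rfl
  obtain ⟨u, hu⟩ := exists_add_of_le hle
  have hsum := congrArg Multiset.sum hu
  rw [Multiset.sum_add, Multiset.sum_replicate, P.parts_sum, smul_eq_mul] at hsum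
  omega

lemma card_count_ge (n k m : ℕ) (hk : 0 < k) (hm : 0 < m) :
    Fintype.card {P : Nat.Partition n // m ≤ P.parts.count k} =
      if m * k ≤ n then p (n - m * k) else 0 := by
  split_ifs with h
  · rw [p]; exact Fintype.card_congr (partEquiv n k m hk h)
  · rw [Fintype.card_eq_zero_iff]
    constructor
    rintro ⟨P, hP⟩
    have h1 := count_mul_le n k P
    have : m * k ≤ P.parts.count k * k := Nat.mul_le_mul_right k hP
    omega

lemma S_eq_sum (N k : ℕ) (hk : 0 < k) :
    S 1 N k = ∑ m ∈ Finset.Icc 1 N, if m * k ≤ N then p (N - m * k) else 0 := by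
  have hS : S 1 N k = ∑ P : Nat.Partition N, P.parts.count k := by
    unfold S
    apply Finset.sum_congr rfl
    intro P _
    rw [if_pos]
    intro i hi
    exact P.parts_pos hi
  rw [hS]
  have key : ∀ P : Nat.Partition N, P.parts.count k =
      ∑ m ∈ Finset.Icc 1 N, if m ≤ P.parts.count k then 1 else 0 := by
    intro P
    have hc : P.parts.count k ≤ N := by
      have := count_mul_le N k P
      nlinarith
    rw [← Finset.sum_filter]
    simp only [Finset.sum_const, smul_eq_mul, mul_one]
    have : (Finset.Icc 1 N).filter (fun m => m ≤ P.parts.count k) =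
        Finset.Icc 1 (P.parts.count k) := by
      ext m; simp only [Finset.mem_filter, Finset.mem_Icc]; omega
    rw [this, Nat.card_Icc]
    omega
  calc ∑ P : Nat.Partition N, P.parts.count k
      = ∑ P : Nat.Partition N, ∑ m ∈ Finset.Icc 1 N,
          (if m ≤ P.parts.count k then 1 else 0) := by
        exact Finset.sum_congr rfl fun P _ => key P
    _ = ∑ m ∈ Finset.Icc 1 N, ∑ P : Nat.Partition N,
          (if m ≤ P.parts.count k then 1 else 0) := Finset.sum_comm
    _ = ∑ m ∈ Finset.Icc 1 N, if m * k ≤ N then p (N - m * k) else 0 := by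
        apply Finset.sum_congr rfl
        intro m hm
        rw [← card_count_ge N k m hk (by simp at hm; omega)]
        rw [Fintype.card_subtype]
        simp [← Finset.sum_filter]



lemma sum_moeb (M : ℕ) : ∑ k ∈ M.divisors, (ArithmeticFunction.moebius k : ℤ) = if M = 1 then 1 else 0 := by
  rw [← ArithmeticFunction.coe_mul_zeta_apply, ArithmeticFunction.moebius_mul_coe_zeta,
    ArithmeticFunction.one_apply]

lemma moeb_mul (α k : ℕ) (hα : α.Prime) :
    (ArithmeticFunction.moebius (α * k) : ℤ) =
      if α ∣ k then 0 else -ArithmeticFunction.moebius k := by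
  split_ifs with h
  · apply ArithmeticFunction.moebius_eq_zero_of_not_squarefree
    intro hsq
    exact hα.ne_one (Nat.isUnit_iff.mp (hsq α (mul_dvd_mul_left α h)))
  · have hcop : Nat.Coprime α k := (Nat.Prime.coprime_iff_not_dvd hα).mpr h
    rw [ArithmeticFunction.isMultiplicative_moebius.map_mul_of_coprime hcop,
      ArithmeticFunction.moebius_apply_prime hα]
    ring

lemma divisor_moeb_sum (α d : ℕ) (hα : α.Prime) (hd : 0 < d) :
    ∑ x ∈ d.divisorsAntidiagonal, (ArithmeticFunction.moebius (α * x.1) : ℤ) =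
      if d / α ^ (d.factorization α) = 1 then -1 else 0 := by
  set M := d / α ^ (d.factorization α) with hM
  have hMd : α ^ (d.factorization α) * M = d := Nat.ordProj_mul_ordCompl_eq_self d α
  have hM0 : M ≠ 0 := (Nat.ordCompl_pos α hd.ne').ne'
  calc ∑ x ∈ d.divisorsAntidiagonal, (ArithmeticFunction.moebius (α * x.1) : ℤ)
      = ∑ k ∈ d.divisors, (ArithmeticFunction.moebius (α * k) : ℤ) := by
        rw [Nat.sum_divisorsAntidiagonal (fun a b => (ArithmeticFunction.moebius (α * a) : ℤ))]
    _ = ∑ k ∈ d.divisors, if α ∣ k then 0 else -(ArithmeticFunction.moebius k : ℤ) := by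
        exact Finset.sum_congr rfl fun k _ => moeb_mul α k hα
    _ = ∑ k ∈ d.divisors.filter (fun k => ¬ α ∣ k), -(ArithmeticFunction.moebius k : ℤ) := by
        rw [Finset.sum_filter]
        exact Finset.sum_congr rfl fun k _ => by split_ifs with h1 h2 <;> simp_all
    _ = ∑ k ∈ M.divisors, -(ArithmeticFunction.moebius k : ℤ) := by
        congr 1
        ext k
        simp only [Finset.mem_filter, Nat.mem_divisors]
        constructor
        · rintro ⟨⟨hk, _⟩, hnd⟩
          refine ⟨?_, hM0⟩
          have hcop : Nat.Coprime k (α ^ (d.factorization α)) :=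
            Nat.Coprime.pow_right _ ((hα.coprime_iff_not_dvd.mpr hnd).symm)
          exact hcop.dvd_of_dvd_mul_left (by rw [hMd]; exact hk)
        · rintro ⟨hk, -⟩
          refine ⟨⟨hk.trans (Dvd.intro_left _ hMd), hd.ne'⟩, fun hak => ?_⟩
          exact Nat.not_dvd_ordCompl hα hd.ne' (hak.trans hk)
    _ = if M = 1 then -1 else 0 := by
        rw [Finset.sum_neg_distrib, sum_moeb]
        split_ifs <;> ring

theorem sum_S1_moebius_prime_mul (α : ℕ) (hα : α.Prime) (n : ℕ) :
    ∑ k ∈ Finset.Icc 1 (n + 1),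
        (S 1 (n + 1) k : ℤ) * ArithmeticFunction.moebius (α * k) =
      -∑ j ∈ (Finset.range (n + 2)).filter (fun j => α ^ j ≤ n + 1),
          (p (n + 1 - α ^ j) : ℤ) := by
  set N := n + 1 with hN
  have hα2 : 2 ≤ α := hα.two_le
  set s : Finset (ℕ × ℕ) :=
    (Finset.Icc 1 N ×ˢ Finset.Icc 1 N).filter (fun x => x.1 * x.2 ≤ N) with hs
  have step1 : ∑ k ∈ Finset.Icc 1 N, (S 1 N k : ℤ) * ArithmeticFunction.moebius (α * k)
      = ∑ x ∈ s, (p (N - x.1 * x.2) : ℤ) * ArithmeticFunction.moebius (α * x.1) := by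
    rw [hs, Finset.sum_filter, Finset.sum_product]
    apply Finset.sum_congr rfl
    intro k hk
    have hk1 : 0 < k := by simp only [Finset.mem_Icc] at hk; omega
    rw [S_eq_sum N k hk1]
    push_cast
    rw [Finset.sum_mul]
    apply Finset.sum_congr rfl
    intro m _
    rw [mul_comm m k]
    split_ifs <;> ring
  have step2 : ∑ x ∈ s, (p (N - x.1 * x.2) : ℤ) * ArithmeticFunction.moebius (α * x.1)
      = ∑ d ∈ Finset.Icc 1 N, ∑ x ∈ d.divisorsAntidiagonal,
          (p (N - x.1 * x.2) : ℤ) * ArithmeticFunction.moebius (α * x.1) := by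
    rw [← Finset.sum_fiberwise_of_maps_to (g := fun x => x.1 * x.2) (t := Finset.Icc 1 N) ?_]
    · apply Finset.sum_congr rfl
      intro d hd
      simp only [Finset.mem_Icc] at hd
      congr 1
      ext x
      simp only [hs, Finset.mem_filter, Finset.mem_product, Finset.mem_Icc,
        Nat.mem_divisorsAntidiagonal]
      constructor
      · rintro ⟨h1, h2⟩
        exact ⟨h2, by omega⟩
      · rintro ⟨hxd, -⟩
        have hx1 : x.1 ∣ d := Dvd.intro _ hxd
        have hx2 : x.2 ∣ d := Dvd.intro_left _ hxd
        have hd0 : 0 < d := by omega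
        have a1 := Nat.pos_of_dvd_of_pos hx1 hd0
        have a2 := (Nat.le_of_dvd hd0 hx1).trans hd.2
        have a3 := Nat.pos_of_dvd_of_pos hx2 hd0
        have a4 := (Nat.le_of_dvd hd0 hx2).trans hd.2
        exact ⟨⟨⟨⟨a1, a2⟩, a3, a4⟩, by omega⟩, hxd⟩
    · intro x hx
      simp only [hs, Finset.mem_filter, Finset.mem_product, Finset.mem_Icc] at hx
      simp only [Finset.mem_Icc]
      exact ⟨Nat.mul_pos hx.1.1.1 hx.1.2.1, hx.2⟩
  have step3 : ∀ d ∈ Finset.Icc 1 N,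
      ∑ x ∈ d.divisorsAntidiagonal,
          (p (N - x.1 * x.2) : ℤ) * ArithmeticFunction.moebius (α * x.1)
        = if d / α ^ (d.factorization α) = 1 then -(p (N - d) : ℤ) else 0 := by
    intro d hd
    simp only [Finset.mem_Icc] at hd
    have : ∑ x ∈ d.divisorsAntidiagonal,
        (p (N - x.1 * x.2) : ℤ) * ArithmeticFunction.moebius (α * x.1)
        = (p (N - d) : ℤ) * ∑ x ∈ d.divisorsAntidiagonal,
            (ArithmeticFunction.moebius (α * x.1) : ℤ) := by
      rw [Finset.mul_sum]
      apply Finset.sum_congr rfl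
      intro x hx
      rw [(Nat.mem_divisorsAntidiagonal.mp hx).1]
    rw [this, divisor_moeb_sum α d hα (by omega)]
    split_ifs <;> ring
  rw [step1, step2, Finset.sum_congr rfl step3, ← Finset.sum_filter]
  have himg : (Finset.Icc 1 N).filter (fun d => d / α ^ (d.factorization α) = 1)
      = ((Finset.range (n + 2)).filter (fun j => α ^ j ≤ n + 1)).image (fun j => α ^ j) := by
    ext d
    simp only [Finset.mem_filter, Finset.mem_Icc, Finset.mem_image, Finset.mem_range]
    constructor
    · rintro ⟨⟨hd1, hd2⟩, hM⟩
      refine ⟨d.factorization α, ⟨?_, ?_⟩, ?_⟩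
      all_goals
        have hMd := Nat.ordProj_mul_ordCompl_eq_self d α
        rw [hM, mul_one] at hMd
      · have : d.factorization α < α ^ (d.factorization α) :=
          Nat.lt_pow_self hα.one_lt
        omega
      · omega
      · omega
    · rintro ⟨j, ⟨-, hj⟩, rfl⟩
      have hfact : (α ^ j).factorization α = j := by
        rw [hα.factorization_pow]
        simp
      refine ⟨⟨Nat.one_le_iff_ne_zero.mpr (by positivity), hj⟩, ?_⟩
      rw [hfact, Nat.div_self (by positivity)]
  rw [himg, Finset.sum_image (fun a _ b _ hab =>
    Nat.pow_right_injective hα2 hab)]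
  rw [← Finset.sum_neg_distrib]
end
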